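/- Let (Ω, μ) be a probability space, let α be a finite type, and let E, E′ : Ω → Finset α be (possibly dependent) measurable random finite sets. Suppose there are τ, ϱ ∈ [0,1] such that for every finite set F ⊆ α one has μ{ω : F ⊆ E(ω)} ≤ τ^{|F|} and μ{ω : F ⊆ E′(ω)} ≤ ϱ^{|F|}. Then for every finite set F ⊆ α, μ{ω : F ⊆ E(ω) ∪ E′(ω)} ≤ ( 2·max(√τ, √ϱ) )^{|F|}. -/
import Mathlib


open MeasureTheory

/-- Support-level composition property of local stochastic noise: if the random finite
sets `E` and `E'` are `τ`- and `ϱ`-local stochastic (i.e. `Pr[F ⊆ E] ≤ τ^{|F|}` and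
`Pr[F ⊆ E'] ≤ ϱ^{|F|}` for all finite `F`), then their union is
`2·max(√τ,√ϱ)`-local stochastic. -/
theorem stmt_9 {Ω : Type*} [MeasurableSpace Ω] (μ : Measure Ω) [IsProbabilityMeasure μ]
    {α : Type*} [Fintype α] [DecidableEq α]
    (E E' : Ω → Finset α) (τ ϱ : ℝ)
    (hτ : τ ∈ Set.Icc (0 : ℝ) 1) (hϱ : ϱ ∈ Set.Icc (0 : ℝ) 1)
    (hEmeas : ∀ F : Finset α, MeasurableSet {ω | F ⊆ E ω})
    (hE'meas : ∀ F : Finset α, MeasurableSet {ω | F ⊆ E' ω})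
    (hE : ∀ F : Finset α, μ {ω | F ⊆ E ω} ≤ ENNReal.ofReal (τ ^ F.card))
    (hE' : ∀ F : Finset α, μ {ω | F ⊆ E' ω} ≤ ENNReal.ofReal (ϱ ^ F.card)) :
    ∀ F : Finset α, μ {ω | F ⊆ E ω ∪ E' ω} ≤
      ENNReal.ofReal ((2 * max (Real.sqrt τ) (Real.sqrt ϱ)) ^ F.card) := by

  intro F
  obtain ⟨hτ0, hτ1⟩ := hτ
  obtain ⟨hϱ0, hϱ1⟩ := hϱ
  set m := max (Real.sqrt τ) (Real.sqrt ϱ) with hm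
  have hm0 : 0 ≤ m := le_trans (Real.sqrt_nonneg τ) (le_max_left _ _)
  have hm1 : m ≤ 1 := max_le (Real.sqrt_le_one.2 hτ1) (Real.sqrt_le_one.2 hϱ1)
  have hsub : {ω | F ⊆ E ω ∪ E' ω} ⊆
      ⋃ A ∈ F.powerset, ({ω | A ⊆ E ω} ∩ {ω | F \ A ⊆ E' ω}) := by
    intro ω hω
    refine Set.mem_iUnion₂.2 ⟨F ∩ E ω, Finset.mem_powerset.2 Finset.inter_subset_left,
      Finset.inter_subset_right, ?_⟩
    intro x hx
    rw [Finset.mem_sdiff, Finset.mem_inter] at hx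
    have := hω hx.1
    rw [Finset.mem_union] at this
    rcases this with h | h
    · exact absurd ⟨hx.1, h⟩ hx.2
    · exact h
  have key : ∀ A ∈ F.powerset,
      μ ({ω | A ⊆ E ω} ∩ {ω | F \ A ⊆ E' ω}) ≤ ENNReal.ofReal (m ^ F.card) := by
    intro A hA
    rw [Finset.mem_powerset] at hA
    have hcard : (F \ A).card = F.card - A.card := Finset.card_sdiff_of_subset hA
    have hle : A.card ≤ F.card := Finset.card_le_card hA
    rcases le_or_gt F.card (2 * A.card) with h | h
    · calc μ ({ω | A ⊆ E ω} ∩ {ω | F \ A ⊆ E' ω}) ≤ μ {ω | A ⊆ E ω} :=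
            measure_mono Set.inter_subset_left
        _ ≤ ENNReal.ofReal (τ ^ A.card) := hE A
        _ ≤ ENNReal.ofReal (m ^ F.card) := by
            apply ENNReal.ofReal_le_ofReal
            have h1 : (Real.sqrt τ) ^ (2 * A.card) = τ ^ A.card := by
              rw [pow_mul, Real.sq_sqrt hτ0]
            rw [← h1]
            calc Real.sqrt τ ^ (2 * A.card) ≤ m ^ (2 * A.card) :=
                  pow_le_pow_left₀ (Real.sqrt_nonneg τ) (le_max_left _ _) _
              _ ≤ m ^ F.card := pow_le_pow_of_le_one hm0 hm1 h
    · have h2 : F.card ≤ 2 * (F \ A).card := by omega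
      calc μ ({ω | A ⊆ E ω} ∩ {ω | F \ A ⊆ E' ω}) ≤ μ {ω | F \ A ⊆ E' ω} :=
            measure_mono Set.inter_subset_right
        _ ≤ ENNReal.ofReal (ϱ ^ (F \ A).card) := hE' (F \ A)
        _ ≤ ENNReal.ofReal (m ^ F.card) := by
            apply ENNReal.ofReal_le_ofReal
            have h1 : (Real.sqrt ϱ) ^ (2 * (F \ A).card) = ϱ ^ (F \ A).card := by
              rw [pow_mul, Real.sq_sqrt hϱ0]
            rw [← h1]
            calc Real.sqrt ϱ ^ (2 * (F \ A).card) ≤ m ^ (2 * (F \ A).card) :=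
                  pow_le_pow_left₀ (Real.sqrt_nonneg ϱ) (le_max_right _ _) _
              _ ≤ m ^ F.card := pow_le_pow_of_le_one hm0 hm1 h2
  calc μ {ω | F ⊆ E ω ∪ E' ω}
      ≤ μ (⋃ A ∈ F.powerset, ({ω | A ⊆ E ω} ∩ {ω | F \ A ⊆ E' ω})) := measure_mono hsub
    _ ≤ ∑ A ∈ F.powerset, μ ({ω | A ⊆ E ω} ∩ {ω | F \ A ⊆ E' ω}) :=
        measure_biUnion_finset_le _ _
    _ ≤ ∑ A ∈ F.powerset, ENNReal.ofReal (m ^ F.card) := Finset.sum_le_sum key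
    _ = (2 ^ F.card : ℕ) * ENNReal.ofReal (m ^ F.card) := by
        rw [Finset.sum_const, Finset.card_powerset, nsmul_eq_mul]
    _ = ENNReal.ofReal ((2 * m) ^ F.card) := by
        rw [mul_pow, ENNReal.ofReal_mul (by exact pow_nonneg (by norm_num) _),
          ENNReal.ofReal_pow hm0, ENNReal.ofReal_pow (by norm_num : (0:ℝ) ≤ 2),
          ENNReal.ofReal_ofNat]
        norm_num
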